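/- Suppose f is bounded below by m, has L-Lipschitz gradient, and along a sequence of iterates the relation ∇f(U^k) = -Y^k holds for all k; then the augmented Lagrangian values L(U^k, Z^k, Y^k) = f(U^k) + ⟨Y^k, U^k - Z^k⟩_F + (ρ/2)‖U^k - Z^k‖_F² with ρ ≥ L are bounded below by m. -/

import Mathlib

open scoped RealInnerProductSpace

theorem descent_lemma {E : Type*} [NormedAddCommGroup E] [InnerProductSpace ℝ E] [CompleteSpace E]
    (f : E → ℝ) (L : ℝ) (hdiff : Differentiable ℝ f)
    (hlip : ∀ U V : E, ‖gradient f U - gradient f V‖ ≤ L * ‖U - V‖)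
    (U Z : E) :
    f Z ≤ f U + ⟪gradient f U, Z - U⟫ + L / 2 * ‖Z - U‖ ^ 2 := by
  set v := Z - U with hv
  have hcont : Continuous (gradient f) := by
    have : LipschitzWith (Real.toNNReal L) (gradient f) := by
      refine LipschitzWith.of_dist_le_mul fun x y => ?_
      rw [dist_eq_norm, dist_eq_norm]
      calc ‖gradient f x - gradient f y‖ ≤ L * ‖x - y‖ := hlip x y
        _ ≤ Real.toNNReal L * ‖x - y‖ :=
            mul_le_mul_of_nonneg_right (Real.le_coe_toNNReal L) (norm_nonneg _)
    exact this.continuous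
  have hline : ∀ t : ℝ, HasDerivAt (fun s : ℝ => f (U + s • v))
      ⟪gradient f (U + t • v), v⟫ t := by
    intro t
    have h1 : HasDerivAt (fun s : ℝ => U + s • v) v t := by
      simpa using ((hasDerivAt_id t).smul_const v).const_add U
    have h2 := (hdiff (U + t • v)).hasGradientAt
    have := h2.hasFDerivAt.comp_hasDerivAt t h1
    exact this
  have hcont2 : Continuous (fun t : ℝ => ⟪gradient f (U + t • v), v⟫) := by
    exact (hcont.comp (by continuity)).inner continuous_const
  have hint : f (U + (1:ℝ) • v) - f (U + (0:ℝ) • v)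
      = ∫ t in (0:ℝ)..1, ⟪gradient f (U + t • v), v⟫ := by
    rw [intervalIntegral.integral_eq_sub_of_hasDerivAt (fun t _ => hline t)
      (hcont2.intervalIntegrable 0 1)]
  have hbound : (∫ t in (0:ℝ)..1, ⟪gradient f (U + t • v), v⟫)
      ≤ ⟪gradient f U, v⟫ + L / 2 * ‖v‖ ^ 2 := by
    have hmono : (∫ t in (0:ℝ)..1, ⟪gradient f (U + t • v), v⟫)
        ≤ ∫ t in (0:ℝ)..1, (⟪gradient f U, v⟫ + L * t * ‖v‖ ^ 2) := by
      apply intervalIntegral.integral_mono_on (by norm_num)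
        (hcont2.intervalIntegrable 0 1)
        ((by continuity : Continuous fun t : ℝ => ⟪gradient f U, v⟫ + L * t * ‖v‖ ^ 2).intervalIntegrable 0 1)
      intro t ht
      obtain ⟨ht0, ht1⟩ := ht
      have h1 : ⟪gradient f (U + t • v), v⟫ - ⟪gradient f U, v⟫
          = ⟪gradient f (U + t • v) - gradient f U, v⟫ := by
        rw [inner_sub_left]
      have h2 : ⟪gradient f (U + t • v) - gradient f U, v⟫ ≤ L * t * ‖v‖ ^ 2 := by
        calc ⟪gradient f (U + t • v) - gradient f U, v⟫
            ≤ ‖gradient f (U + t • v) - gradient f U‖ * ‖v‖ :=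
              real_inner_le_norm _ _
          _ ≤ (L * ‖(U + t • v) - U‖) * ‖v‖ :=
              mul_le_mul_of_nonneg_right (hlip _ _) (norm_nonneg _)
          _ = L * t * ‖v‖ ^ 2 := by
              simp [norm_smul, abs_of_nonneg ht0]; ring
      linarith
    have heval : (∫ t in (0:ℝ)..1, (⟪gradient f U, v⟫ + L * t * ‖v‖ ^ 2))
        = ⟪gradient f U, v⟫ + L / 2 * ‖v‖ ^ 2 := by
      rw [intervalIntegral.integral_add (by apply Continuous.intervalIntegrable; continuity)
        (by apply Continuous.intervalIntegrable; continuity)]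
      simp only [intervalIntegral.integral_const, smul_eq_mul]
      have : (∫ t in (0:ℝ)..1, L * t * ‖v‖ ^ 2)
          = (L * ‖v‖ ^ 2) * ∫ t in (0:ℝ)..1, t := by
        rw [← intervalIntegral.integral_const_mul]
        congr 1; ext t; ring
      rw [this, integral_id]; ring
    linarith
  have : U + (1:ℝ) • v = Z := by simp [hv]
  have h0 : U + (0:ℝ) • v = U := by simp
  rw [this, h0] at hint
  linarith [hint, hbound]

theorem auglag_bounded_below {d r : ℕ}
    (f : EuclideanSpace ℝ (Fin d × Fin r) → ℝ) (L ρ m : ℝ)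
    (hdiff : Differentiable ℝ f)
    (hlip : ∀ U V : EuclideanSpace ℝ (Fin d × Fin r),
      ‖gradient f U - gradient f V‖ ≤ L * ‖U - V‖)
    (hbdd : ∀ x, m ≤ f x)
    (U Z Y : ℕ → EuclideanSpace ℝ (Fin d × Fin r))
    (hopt : ∀ k, gradient f (U k) = -(Y k))
    (hρ : L ≤ ρ) (hρpos : 0 < ρ) :
    ∀ k, m ≤ f (U k) + ⟪Y k, U k - Z k⟫ + ρ / 2 * ‖U k - Z k‖ ^ 2 := by
  intro k
  have hd := descent_lemma f L hdiff hlip (U k) (Z k)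
  rw [hopt k] at hd
  have h1 : ⟪-(Y k), Z k - U k⟫ = ⟪Y k, U k - Z k⟫ := by
    rw [inner_neg_left, ← inner_neg_right, neg_sub]
  rw [h1] at hd
  have h2 : ‖Z k - U k‖ = ‖U k - Z k‖ := norm_sub_rev _ _
  rw [h2] at hd
  have h3 : L / 2 * ‖U k - Z k‖ ^ 2 ≤ ρ / 2 * ‖U k - Z k‖ ^ 2 := by
    have := sq_nonneg ‖U k - Z k‖
    nlinarith
  linarith [hbdd (Z k)]
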